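/- If (x, y) ∈ ℤ² satisfies Pell's equation x² − N y² = 1 for an integer N, then N x² y² is a sum of two rational cubes. -/

import Mathlib

theorem stmt_14 (N x y : ℤ) (h : x^2 - N*y^2 = 1) :
    ∃ q₁ q₂ : ℚ, (N*x^2*y^2 : ℤ) = q₁^3 + q₂^3 := by
  have hN : (N*x^2*y^2 : ℤ) = x^2*(x^2-1) := by nlinarith [h]
  refine ⟨((x:ℚ)^6+3*(x:ℚ)^4-6*(x:ℚ)^2+1)/(3*((x:ℚ)^4-(x:ℚ)^2+1)),
          (-(x:ℚ)^6+6*(x:ℚ)^4-3*(x:ℚ)^2-1)/(3*((x:ℚ)^4-(x:ℚ)^2+1)), ?_⟩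
  have hpos : (0:ℚ) < (x:ℚ)^4-(x:ℚ)^2+1 := by
    nlinarith [sq_nonneg ((x:ℚ)^2-1), sq_nonneg (x:ℚ)]
  have hd : (3*((x:ℚ)^4-(x:ℚ)^2+1)) ≠ 0 := by positivity
  rw [hN]
  push_cast
  rw [div_pow, div_pow, ← add_div, eq_div_iff (pow_ne_zero 3 hd)]
  ring
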